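/- Let A ⊆ ℕ^n be finite, d > deg(A), and suppose for every β ∈ ℕ^n_d \ A there exist real coefficients p_{β,α} such that the polynomial p_β := x^β − Σ_{α∈A} p_{β,α} x^α is given. Then the ideal J generated by the polynomials { p_β : β ∈ ℕ^n_d \ A } is zero-dimensional, and dim ℝ[x]/J ≤ |A|. -/

import Mathlib

open MvPolynomial

/-- The ideal generated by the polynomials `p_β = x^β - ∑_{α ∈ A} p_{β,α} x^α`
for `β ∈ ℕ^n_d \ A`. -/
noncomputable def reductionIdeal (n d : ℕ) (A : Finset (Fin n →₀ ℕ))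
    (pc : (Fin n →₀ ℕ) → (Fin n →₀ ℕ) → ℝ) : Ideal (MvPolynomial (Fin n) ℝ) :=
  Ideal.span {q | ∃ β : Fin n →₀ ℕ, (β.sum fun _ e => e) ≤ d ∧ β ∉ A ∧
    q = monomial β 1 - ∑ α ∈ A, C (pc β α) * monomial α 1}

theorem key (n d : ℕ) (A : Finset (Fin n →₀ ℕ))
    (hd : ∀ α ∈ A, (α.sum fun _ e => e) < d)
    (pc : (Fin n →₀ ℕ) → (Fin n →₀ ℕ) → ℝ) :
    ∀ β : Fin n →₀ ℕ, (monomial β 1 : MvPolynomial (Fin n) ℝ) ∈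
      (reductionIdeal n d A pc).restrictScalars ℝ ⊔
      Submodule.span ℝ ((fun α => (monomial α 1 : MvPolynomial (Fin n) ℝ)) '' A) := by
  set J := reductionIdeal n d A pc
  set S := J.restrictScalars ℝ ⊔
      Submodule.span ℝ ((fun α => (monomial α 1 : MvPolynomial (Fin n) ℝ)) '' A) with hS
  suffices h : ∀ N : ℕ, ∀ β : Fin n →₀ ℕ, (β.sum fun _ e => e) = N →
      (monomial β 1 : MvPolynomial (Fin n) ℝ) ∈ S from fun β => h _ β rfl
  intro N
  induction N using Nat.strong_induction_on with
  | _ N IH =>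
  intro β hN
  subst hN
  by_cases hA : β ∈ A
  · exact Submodule.mem_sup_right (Submodule.subset_span ⟨β, hA, rfl⟩)
  by_cases hle : (β.sum fun _ e => e) ≤ d
  · have hgen : (monomial β 1 - ∑ α ∈ A, C (pc β α) * monomial α 1 : MvPolynomial (Fin n) ℝ) ∈ J :=
      Ideal.subset_span ⟨β, hle, hA, rfl⟩
    have : (monomial β 1 : MvPolynomial (Fin n) ℝ) =
        (monomial β 1 - ∑ α ∈ A, C (pc β α) * monomial α 1) +
        ∑ α ∈ A, pc β α • monomial α 1 := by
      simp [smul_eq_C_mul]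
    rw [this]
    exact Submodule.add_mem _ (Submodule.mem_sup_left hgen)
      (Submodule.mem_sup_right (Submodule.sum_mem _ fun α hα =>
        Submodule.smul_mem _ _ (Submodule.subset_span ⟨α, hα, rfl⟩)))
  · push_neg at hle
    -- β.sum > d, so β ≠ 0, pick i with β i ≠ 0
    have hβ0 : β ≠ 0 := by
      rintro rfl; simp at hle
    obtain ⟨i, hi⟩ : ∃ i, β i ≠ 0 := by
      by_contra h; push_neg at h; exact hβ0 (Finsupp.ext fun i => h i)
    set β' := β - Finsupp.single i 1 with hβ'
    have hsplit : β = β' + Finsupp.single i 1 := by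
      ext j
      simp only [Finsupp.coe_add, Pi.add_apply, hβ', Finsupp.coe_tsub, Pi.sub_apply]
      rcases eq_or_ne j i with rfl | hj
      · rw [Finsupp.single_eq_same]; omega
      · rw [Finsupp.single_eq_of_ne' (fun h => hj h.symm)]; omega
    have hβ'sum : (β'.sum fun _ e => e) + 1 = β.sum fun _ e => e := by
      have := Finsupp.sum_add_index' (f := β') (g := Finsupp.single i 1)
        (h := fun (_ : Fin n) (e : ℕ) => e) (fun _ => rfl) (fun _ _ _ => rfl)
      rw [hsplit, this, Finsupp.sum_single_index rfl]
    have hβ'lt : (β'.sum fun _ e => e) < β.sum fun _ e => e := by omega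
    have hmul : ∀ q ∈ S, X i * q ∈ S := by
      intro q hq
      rw [hS] at hq
      rcases Submodule.mem_sup.mp hq with ⟨j, hj, s, hs, rfl⟩
      rw [mul_add]
      refine Submodule.add_mem _ (Submodule.mem_sup_left (J.mul_mem_left _ hj)) ?_
      refine Submodule.span_induction (p := fun s _ => X i * s ∈ S) ?_ ?_ ?_ ?_ hs
      · rintro _ ⟨α, hα, rfl⟩
        have : X i * (monomial α 1 : MvPolynomial (Fin n) ℝ) =
            monomial (α + Finsupp.single i 1) 1 := by
          rw [X, monomial_mul, one_mul, add_comm]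
        rw [this]
        refine IH ((α + Finsupp.single i 1).sum fun _ e => e) ?_ _ rfl
        have : ((α + Finsupp.single i 1).sum fun _ e => e) =
            (α.sum fun _ e => e) + 1 := by
          rw [Finsupp.sum_add_index' (fun _ => rfl) (fun _ _ _ => rfl),
            Finsupp.sum_single_index rfl]
        rw [this]
        have := hd α hα
        omega
      · simp
      · intro a b _ _ ha hb; rw [mul_add]; exact Submodule.add_mem _ ha hb
      · intro c a _ ha; rw [mul_smul_comm]; exact Submodule.smul_mem _ _ ha
    have hβ'mem : (monomial β' 1 : MvPolynomial (Fin n) ℝ) ∈ S :=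
      IH _ hβ'lt _ rfl
    have : (monomial β 1 : MvPolynomial (Fin n) ℝ) = X i * monomial β' 1 := by
      rw [X, monomial_mul, one_mul, add_comm, ← hsplit]
    rw [this]
    exact hmul _ hβ'mem


/-- If `d > deg(A)`, the ideal generated by the polynomials
`p_β = x^β - ∑_{α∈A} p_{β,α} x^α` (for all `β ∈ ℕ^n_d \ A`) is zero-dimensional
and the quotient ring has dimension at most `|A|`. -/
theorem reductionIdeal_zero_dimensional
    (n d : ℕ) (A : Finset (Fin n →₀ ℕ))
    (hd : ∀ α ∈ A, (α.sum fun _ e => e) < d)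
    (pc : (Fin n →₀ ℕ) → (Fin n →₀ ℕ) → ℝ) :
    FiniteDimensional ℝ (MvPolynomial (Fin n) ℝ ⧸ reductionIdeal n d A pc) ∧
    Module.finrank ℝ (MvPolynomial (Fin n) ℝ ⧸ reductionIdeal n d A pc) ≤ A.card := by
  classical
  set J := reductionIdeal n d A pc with hJ
  set v : A → MvPolynomial (Fin n) ℝ ⧸ J :=
    fun α => Ideal.Quotient.mk J (monomial α.1 1) with hv
  have hStop : (J.restrictScalars ℝ ⊔
      Submodule.span ℝ ((fun α => (monomial α 1 : MvPolynomial (Fin n) ℝ)) '' A)) = ⊤ := by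
    rw [eq_top_iff]
    intro p _
    rw [p.as_sum]
    refine Submodule.sum_mem _ fun s hs => ?_
    have : (monomial s (coeff s p) : MvPolynomial (Fin n) ℝ) =
        coeff s p • monomial s 1 := by
      rw [smul_monomial, smul_eq_mul, mul_one]
    rw [this]
    exact Submodule.smul_mem _ _ (key n d A hd pc s)
  have hspan : Submodule.span ℝ (Set.range v) = ⊤ := by
    rw [eq_top_iff]
    rintro x -
    obtain ⟨p, rfl⟩ := Ideal.Quotient.mk_surjective x
    have hp : p ∈ (J.restrictScalars ℝ ⊔
        Submodule.span ℝ ((fun α => (monomial α 1 : MvPolynomial (Fin n) ℝ)) '' A)) :=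
      hStop ▸ Submodule.mem_top
    rcases Submodule.mem_sup.mp hp with ⟨j, hj, q, hq, rfl⟩
    set f : MvPolynomial (Fin n) ℝ →ₗ[ℝ] MvPolynomial (Fin n) ℝ ⧸ J :=
      (Ideal.Quotient.mkₐ ℝ J).toLinearMap with hf
    have h1 : Ideal.Quotient.mk J (j + q) = f q := by
      show Ideal.Quotient.mk J (j + q) = Ideal.Quotient.mk J q
      rw [map_add, Ideal.Quotient.eq_zero_iff_mem.mpr hj, zero_add]
    rw [h1]
    have : f q ∈ Submodule.map f (Submodule.span ℝ
        ((fun α => (monomial α 1 : MvPolynomial (Fin n) ℝ)) '' A)) :=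
      Submodule.mem_map_of_mem hq
    rw [Submodule.map_span] at this
    refine Submodule.span_mono ?_ this
    rintro _ ⟨_, ⟨α, hα, rfl⟩, rfl⟩
    exact ⟨⟨α, hα⟩, rfl⟩
  constructor
  · exact ⟨Submodule.fg_def.mpr ⟨Set.range v, Set.finite_range v, hspan⟩⟩
  · have := finrank_le_of_span_eq_top hspan
    simpa [Fintype.card_coe] using this
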